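/- Let x ∈ Δ(Θ) with optimal sender lying probability p*(x) = (μ/(1-μ))θ_j for some index j with j > min{i : x_i > 0}. Split x into y = (1/F_j(x))·(0,...,0,x_j,...,x_n) and z = (1/(1-F_j(x)))·(x_1,...,x_{j-1},0,...,0), where F_j(x) = Σ_{k=j}^n x_k. Then the optimal sender lying probability on y equals p*(x), and the optimal sender lying probability on z is strictly less than p*(x). -/

import Mathlib

open Finset

/-- The sender's revenue from targeting the persuasion threshold of type `θ l` against
distribution `w`: `(μ + (1-μ)p_l)·Σ_{k≥l} w_k` with `p_l = (μ/(1-μ))θ_l`. -/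
noncomputable def R (n : ℕ) (θ : Fin n → ℝ) (μ : ℝ) (w : Fin n → ℝ) (l : Fin n) : ℝ :=
  (μ + (1 - μ) * (μ / (1 - μ) * θ l)) * ∑ k ∈ Finset.univ.filter (fun k => l ≤ k), w k

/-- `l` is the optimal targeting index for `w` (ties broken toward the lowest index). -/
noncomputable def OptIdx (n : ℕ) (θ : Fin n → ℝ) (μ : ℝ) (w : Fin n → ℝ) (l : Fin n) : Prop :=
  (∀ k, R n θ μ w k ≤ R n θ μ w l) ∧ (∀ k, R n θ μ w k = R n θ μ w l → l ≤ k)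

/-- Splitting construction. If the optimal lying probability on `x` is
`p_j = (μ/(1-μ))θ_j` with `j` strictly above the lowest index in the support of `x`, and
`x` is split into `y` (normalized restriction to indices `≥ j`) and `z` (normalized
restriction to indices `< j`), then the optimal lying probability on `y` equals `p_j` and
the optimal lying probability on `z` is strictly less than `p_j`. -/
theorem stmt13 (n : ℕ) (θ : Fin n → ℝ) (μ : ℝ) (x y z : Fin n → ℝ)
    (j jmin : Fin n) (F : ℝ)
    (hθpos : ∀ l, 0 < θ l) (hθmono : StrictMono θ) (hμ0 : 0 < μ) (hμ1 : μ < 1)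
    (hx : ∀ k, 0 ≤ x k) (hx1 : ∑ k, x k = 1)
    (hjmin : 0 < x jmin) (hjminle : ∀ k, 0 < x k → jmin ≤ k) (hlt : jmin < j)
    (hF : F = ∑ k ∈ Finset.univ.filter (fun k => j ≤ k), x k)
    (hF0 : 0 < F) (hF1 : F < 1)
    (hy : ∀ k, y k = if j ≤ k then x k / F else 0)
    (hz : ∀ k, z k = if k < j then x k / (1 - F) else 0)
    (hopt : OptIdx n θ μ x j) :
    OptIdx n θ μ y j ∧
      ∀ l, OptIdx n θ μ z l → μ / (1 - μ) * θ l < μ / (1 - μ) * θ j := by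
  have hμpos : (0:ℝ) < 1 - μ := by linarith
  have hμne : (1:ℝ) - μ ≠ 0 := ne_of_gt hμpos
  have hFne : F ≠ 0 := ne_of_gt hF0
  have hc : ∀ l, μ + (1-μ) * (μ/(1-μ) * θ l) = μ * (1 + θ l) := by
    intro l; field_simp
  have hcpos : ∀ l : Fin n, 0 < μ * (1 + θ l) := fun l => by nlinarith [hθpos l]
  have hSy : ∀ l : Fin n, ∑ k ∈ Finset.univ.filter (fun k => l ≤ k), y k
      = (∑ k ∈ Finset.univ.filter (fun k => l ≤ k ∧ j ≤ k), x k) / F := by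
    intro l
    rw [Finset.sum_congr rfl (fun k _ => hy k), ← Finset.sum_filter,
      Finset.filter_filter, Finset.sum_div]
  have hSz : ∀ l : Fin n, ∑ k ∈ Finset.univ.filter (fun k => l ≤ k), z k
      = (∑ k ∈ Finset.univ.filter (fun k => l ≤ k ∧ k < j), x k) / (1 - F) := by
    intro l
    rw [Finset.sum_congr rfl (fun k _ => hz k), ← Finset.sum_filter,
      Finset.filter_filter, Finset.sum_div]
  -- R on y for indices ≥ j
  have hRy_ge : ∀ l : Fin n, j ≤ l → R n θ μ y l = R n θ μ x l / F := by
    intro l hl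
    unfold R
    rw [hSy l]
    have : Finset.univ.filter (fun k : Fin n => l ≤ k ∧ j ≤ k)
        = Finset.univ.filter (fun k => l ≤ k) := by
      apply Finset.filter_congr
      intro k _
      exact ⟨fun h => h.1, fun h => ⟨h, le_trans hl h⟩⟩
    rw [this]; ring
  -- R on y for indices < j
  have hSy_lt : ∀ l : Fin n, l ≤ j → ∑ k ∈ Finset.univ.filter (fun k => l ≤ k), y k = 1 := by
    intro l hl
    rw [hSy l]
    have : Finset.univ.filter (fun k : Fin n => l ≤ k ∧ j ≤ k)
        = Finset.univ.filter (fun k => j ≤ k) := by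
      apply Finset.filter_congr
      intro k _
      exact ⟨fun h => h.2, fun h => ⟨le_trans hl h, h⟩⟩
    rw [this, ← hF]
    exact div_self hFne
  have hRyj : R n θ μ y j = μ * (1 + θ j) := by
    unfold R
    rw [hSy_lt j le_rfl, hc j, mul_one]
  have hRy_lt : ∀ l : Fin n, l < j → R n θ μ y l < R n θ μ y j := by
    intro l hl
    unfold R
    rw [hSy_lt l hl.le, hSy_lt j le_rfl, hc l, hc j, mul_one, mul_one]
    have := hθmono hl
    nlinarith
  constructor
  · constructor
    · intro k
      rcases lt_or_ge k j with h | h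
      · exact (hRy_lt k h).le
      · rw [hRy_ge k h, hRy_ge j le_rfl]
        exact (div_le_div_iff_of_pos_right hF0).mpr (hopt.1 k)
    · intro k hk
      by_contra h
      push_neg at h
      exact absurd hk (ne_of_lt (hRy_lt k h))
  · -- z part
    have hRz0 : ∀ l : Fin n, j ≤ l → R n θ μ z l = 0 := by
      intro l hl
      unfold R
      rw [hSz l]
      have : Finset.univ.filter (fun k : Fin n => l ≤ k ∧ k < j) = ∅ := by
        apply Finset.filter_eq_empty_iff.mpr
        intro k _
        rintro ⟨h1, h2⟩
        exact absurd (lt_of_le_of_lt (le_trans hl h1) h2) (lt_irrefl j)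
      rw [this, Finset.sum_empty, zero_div, mul_zero]
    have hRzmin : 0 < R n θ μ z jmin := by
      unfold R
      rw [hSz jmin, hc jmin]
      apply mul_pos (hcpos jmin)
      apply div_pos _ (by linarith)
      have hmem : jmin ∈ Finset.univ.filter (fun k : Fin n => jmin ≤ k ∧ k < j) := by
        simp [hlt]
      calc (0:ℝ) < x jmin := hjmin
        _ ≤ _ := Finset.single_le_sum (fun k _ => hx k) hmem
    intro l hl
    have hlj : l < j := by
      by_contra h
      push_neg at h
      have h0 := hRz0 l h
      have := hl.1 jmin
      rw [h0] at this
      linarith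
    have := hθmono hlj
    have hq : 0 < μ / (1 - μ) := div_pos hμ0 hμpos
    exact mul_lt_mul_of_pos_left this hq
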